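/- arXiv:2403.00130 — 2 statements merged into one kernel-verified Lean document; each statement's English description precedes it below -/
import Mathlib

section
/- Let $X, \tilde{X} \in C^2([0,T]^2;\mathbb{R}^d)$ and let $(w,\tau)$ be an extended word of length $n$. Then $|\langle \mathbf{S}_{\mathbf{s}\mathbf{t}}(X) - \mathbf{S}_{\mathbf{s}\mathbf{t}}(\tilde{X}), (w,\tau)\rangle| \le \frac{T^{2n}}{(n!)^2} \sum_{k=1}^n \left(\prod_{i=1}^{k-1}\|X^{w_i}\|_{C^2} \prod_{j=k+1}^n \|\tilde{X}^{w_j}\|_{C^2}\right) \|X^{w_k} - \tilde{X}^{w_k}\|_{C^2}$ for all $(\mathbf{s},\mathbf{t})$ with $\mathbf{s} \le \mathbf{t}$ componentwise in $[0,T]^2$. In particular $X \mapsto \mathbf{S}_{\mathbf{s}\mathbf{t}}(X)$ is locally Lipschitz in the $C^2$ norm. -/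
open MeasureTheory
open scoped ENNReal NNReal

/-- The mixed partial derivative `∂²f/∂r₁∂r₂`. -/
noncomputable def d12 (f : ℝ × ℝ → ℝ) (p : ℝ × ℝ) : ℝ :=
  deriv (fun a => deriv (fun b => f (a, b)) p.2) p.1

/-- The 1D simplex `Δ_{a,b}^n`. -/
def simplex (a b : ℝ) (n : ℕ) : Set (Fin n → ℝ) :=
  {r | (∀ i, a ≤ r i ∧ r i ≤ b) ∧ ∀ i j : Fin n, i ≤ j → r i ≤ r j}

/-- The 2D simplex `Δ^n_{[s,t]}`: `n`-tuples of points of the rectangle, increasing in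
both coordinates (recorded as a pair of increasing coordinate sequences). -/
def simplex2 (s1 t1 s2 t2 : ℝ) (n : ℕ) : Set ((Fin n → ℝ) × (Fin n → ℝ)) :=
  {p | p.1 ∈ simplex s1 t1 n ∧ p.2 ∈ simplex s2 t2 n}

/-- The full 2D signature coefficient
`⟨S_{s,t}(X), (w, ν)⟩ = ∫_{Δⁿ_{[s,t]}} ∏ᵢ ∂₁₂X^{wᵢ}(r₁ⁱ, r₂^{ν(i)})`. -/
noncomputable def sigFull {d : ℕ} (X : Fin d → ℝ × ℝ → ℝ) (s1 s2 t1 t2 : ℝ)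
    {n : ℕ} (w : Fin n → Fin d) (ν : Equiv.Perm (Fin n)) : ℝ :=
  ∫ p in simplex2 s1 t1 s2 t2 n, ∏ i, d12 (X (w i)) (p.1 i, p.2 (ν i))

/-- The `C²` supremum norm of `f` on the square `[0,T]²`: the supremum of the norms of
all iterated derivatives of order `≤ 2` over the square. -/
noncomputable def C2norm (f : ℝ × ℝ → ℝ) (T : ℝ) : ℝ :=
  sSup {y : ℝ | ∃ k : ℕ, k ≤ 2 ∧ ∃ p ∈ Set.Icc (0:ℝ) T ×ˢ Set.Icc (0:ℝ) T,
    y = ‖iteratedFDeriv ℝ k f p‖}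

/-! ### Auxiliary lemmas on `d12` and `C2norm` -/

lemma d12_eq (f : ℝ × ℝ → ℝ) (hf : ContDiff ℝ 2 f) (p : ℝ × ℝ) :
    d12 f p = iteratedFDeriv ℝ 2 f p ![(1,0),(0,1)] := by
  have hdiff : Differentiable ℝ f := hf.differentiable (by norm_num)
  have h1 : ∀ q : ℝ × ℝ, deriv (fun b => f (q.1, b)) q.2 = fderiv ℝ f q ((0:ℝ),(1:ℝ)) := by
    intro q
    have hcurve : HasDerivAt (fun b => ((q.1, b) : ℝ × ℝ)) ((0:ℝ),(1:ℝ)) q.2 :=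
      (hasDerivAt_const _ _).prodMk (hasDerivAt_id _)
    have := (hdiff q).hasFDerivAt.comp_hasDerivAt q.2 (by simpa using hcurve)
    exact this.deriv
  have hF : ContDiff ℝ 1 (fderiv ℝ f) := hf.fderiv_right (by norm_num)
  have h2 : HasDerivAt (fun a => fderiv ℝ f (a, p.2) ((0:ℝ),(1:ℝ)))
      (fderiv ℝ (fderiv ℝ f) p ((1:ℝ),(0:ℝ)) ((0:ℝ),(1:ℝ))) p.1 := by
    have hcurve : HasDerivAt (fun a => ((a, p.2) : ℝ × ℝ)) ((1:ℝ),(0:ℝ)) p.1 :=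
      (hasDerivAt_id _).prodMk (hasDerivAt_const _ _)
    have hg : HasDerivAt (fun a => fderiv ℝ f (a, p.2))
        (fderiv ℝ (fderiv ℝ f) p ((1:ℝ),(0:ℝ))) p.1 := by
      have := ((hF.differentiable one_ne_zero) p).hasFDerivAt.comp_hasDerivAt p.1
        (by simpa using hcurve)
      exact this
    have := hg.clm_apply (hasDerivAt_const p.1 ((0:ℝ),(1:ℝ)))
    simpa using this
  have : d12 f p = deriv (fun a => fderiv ℝ f (a, p.2) ((0:ℝ),(1:ℝ))) p.1 := by
    unfold d12
    congr 1
    funext a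
    exact h1 (a, p.2)
  rw [this, h2.deriv, iteratedFDeriv_two_apply]
  simp

lemma d12_abs_le_norm (f : ℝ × ℝ → ℝ) (hf : ContDiff ℝ 2 f) (p : ℝ × ℝ) :
    |d12 f p| ≤ ‖iteratedFDeriv ℝ 2 f p‖ := by
  rw [d12_eq f hf p]
  calc |iteratedFDeriv ℝ 2 f p ![(1,0),(0,1)]|
      ≤ ‖iteratedFDeriv ℝ 2 f p‖ * ∏ i, ‖(![((1:ℝ),(0:ℝ)),((0:ℝ),(1:ℝ))]) i‖ :=
        (iteratedFDeriv ℝ 2 f p).le_opNorm _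
    _ = ‖iteratedFDeriv ℝ 2 f p‖ := by
        rw [Fin.prod_univ_two]
        simp [Prod.norm_def]

lemma d12_sub (f g : ℝ × ℝ → ℝ) (hf : ContDiff ℝ 2 f) (hg : ContDiff ℝ 2 g) (p : ℝ × ℝ) :
    d12 f p - d12 g p = d12 (fun q => f q - g q) p := by
  rw [d12_eq f hf p, d12_eq g hg p, d12_eq _ (hf.sub hg) p]
  have h : (fun q => f q - g q) = f + fun q => -g q := by funext q; simp [sub_eq_add_neg]
  rw [h, iteratedFDeriv_add_apply hf.contDiffAt hg.neg.contDiffAt]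
  rw [show (fun x => -g x) = -g from rfl, iteratedFDeriv_neg_apply]
  simp [sub_eq_add_neg]

lemma d12_continuous (f : ℝ × ℝ → ℝ) (hf : ContDiff ℝ 2 f) : Continuous (d12 f) := by
  have h : d12 f = fun p => iteratedFDeriv ℝ 2 f p ![(1,0),(0,1)] :=
    funext (d12_eq f hf)
  rw [h]
  exact (continuous_eval_const _).comp (hf.continuous_iteratedFDeriv le_rfl)

lemma C2set_bddAbove (f : ℝ × ℝ → ℝ) (hf : ContDiff ℝ 2 f) (T : ℝ) :
    BddAbove {y : ℝ | ∃ k : ℕ, k ≤ 2 ∧ ∃ p ∈ Set.Icc (0:ℝ) T ×ˢ Set.Icc (0:ℝ) T,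
      y = ‖iteratedFDeriv ℝ k f p‖} := by
  have hK : IsCompact (Set.Icc (0:ℝ) T ×ˢ Set.Icc (0:ℝ) T) :=
    isCompact_Icc.prod isCompact_Icc
  have hb : ∀ k : ℕ, k ≤ 2 → BddAbove ((fun p => ‖iteratedFDeriv ℝ k f p‖) ''
      (Set.Icc (0:ℝ) T ×ˢ Set.Icc (0:ℝ) T)) := fun k hk =>
    (hK.image ((hf.continuous_iteratedFDeriv (by exact_mod_cast hk)).norm)).bddAbove
  have : {y : ℝ | ∃ k : ℕ, k ≤ 2 ∧ ∃ p ∈ Set.Icc (0:ℝ) T ×ˢ Set.Icc (0:ℝ) T,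
      y = ‖iteratedFDeriv ℝ k f p‖} ⊆
      ((fun p => ‖iteratedFDeriv ℝ 0 f p‖) '' (Set.Icc (0:ℝ) T ×ˢ Set.Icc (0:ℝ) T)) ∪
      ((fun p => ‖iteratedFDeriv ℝ 1 f p‖) '' (Set.Icc (0:ℝ) T ×ˢ Set.Icc (0:ℝ) T)) ∪
      ((fun p => ‖iteratedFDeriv ℝ 2 f p‖) '' (Set.Icc (0:ℝ) T ×ˢ Set.Icc (0:ℝ) T)) := by
    rintro y ⟨k, hk, p, hp, rfl⟩
    interval_cases k
    · exact Or.inl (Or.inl ⟨p, hp, rfl⟩)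
    · exact Or.inl (Or.inr ⟨p, hp, rfl⟩)
    · exact Or.inr ⟨p, hp, rfl⟩
  exact (((hb 0 (by norm_num)).union (hb 1 (by norm_num))).union (hb 2 le_rfl)).mono this

lemma le_C2norm (f : ℝ × ℝ → ℝ) (hf : ContDiff ℝ 2 f) {T : ℝ} {k : ℕ} (hk : k ≤ 2)
    {p : ℝ × ℝ} (hp : p ∈ Set.Icc (0:ℝ) T ×ˢ Set.Icc (0:ℝ) T) :
    ‖iteratedFDeriv ℝ k f p‖ ≤ C2norm f T :=
  le_csSup (C2set_bddAbove f hf T) ⟨k, hk, p, hp, rfl⟩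

lemma C2norm_nonneg (f : ℝ × ℝ → ℝ) (hf : ContDiff ℝ 2 f) {T : ℝ} (hT : 0 ≤ T) :
    0 ≤ C2norm f T :=
  le_trans (norm_nonneg _) (le_C2norm f hf (k := 0) (by norm_num)
    (p := (0,0)) (by constructor <;> exact ⟨le_rfl, hT⟩))

lemma d12_abs_le_C2norm (f : ℝ × ℝ → ℝ) (hf : ContDiff ℝ 2 f) {T : ℝ} {p : ℝ × ℝ}
    (hp : p ∈ Set.Icc (0:ℝ) T ×ˢ Set.Icc (0:ℝ) T) :
    |d12 f p| ≤ C2norm f T :=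
  (d12_abs_le_norm f hf p).trans (le_C2norm f hf le_rfl hp)

/-! ### The telescoping product estimate -/

lemma filter_lt_zero_eq (n : ℕ) :
    (Finset.univ.filter fun i : Fin (n+1) => i < 0) = ∅ := by
  simp [Finset.filter_eq_empty_iff]

lemma prod_filter_zero_lt (n : ℕ) (B : Fin (n+1) → ℝ) :
    ∏ j ∈ Finset.univ.filter (fun j : Fin (n+1) => 0 < j), B j = ∏ i : Fin n, B i.succ := by
  rw [Finset.prod_filter, Fin.prod_univ_succ]
  simp [Fin.succ_pos]

lemma prod_filter_lt_succ (n : ℕ) (A : Fin (n+1) → ℝ) (k : Fin n) :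
    ∏ i ∈ Finset.univ.filter (fun i : Fin (n+1) => i < k.succ), A i
      = A 0 * ∏ i ∈ Finset.univ.filter (fun i : Fin n => i < k), A i.succ := by
  rw [Finset.prod_filter, Finset.prod_filter, Fin.prod_univ_succ]
  simp [Fin.succ_lt_succ_iff, Fin.succ_pos]

lemma prod_filter_succ_lt (n : ℕ) (B : Fin (n+1) → ℝ) (k : Fin n) :
    ∏ j ∈ Finset.univ.filter (fun j : Fin (n+1) => k.succ < j), B j
      = ∏ j ∈ Finset.univ.filter (fun j : Fin n => k < j), B j.succ := by
  rw [Finset.prod_filter, Finset.prod_filter, Fin.prod_univ_succ]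
  simp [Fin.succ_lt_succ_iff]

lemma prod_sub_prod_bound : ∀ (n : ℕ) (a b A B D : Fin n → ℝ),
    (∀ i, |a i| ≤ A i) → (∀ i, |b i| ≤ B i) → (∀ i, |a i - b i| ≤ D i) →
    |∏ i, a i - ∏ i, b i| ≤ ∑ k : Fin n,
      (∏ i ∈ Finset.univ.filter fun i : Fin n => i < k, A i) *
      (∏ j ∈ Finset.univ.filter fun j : Fin n => k < j, B j) * D k := by
  intro n
  induction n with
  | zero => intro a b A B D _ _ _; simp
  | succ n ih =>
    intro a b A B D hA hB hD
    have hA0 : 0 ≤ A 0 := (abs_nonneg _).trans (hA 0)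
    have hD0 : 0 ≤ D 0 := (abs_nonneg _).trans (hD 0)
    have hPb : |∏ i : Fin n, b i.succ| ≤ ∏ i : Fin n, B i.succ := by
      rw [Finset.abs_prod]
      exact Finset.prod_le_prod (fun _ _ => abs_nonneg _) (fun i _ => hB _)
    have ih' := ih (fun i => a i.succ) (fun i => b i.succ) (fun i => A i.succ)
      (fun i => B i.succ) (fun i => D i.succ) (fun i => hA _) (fun i => hB _) (fun i => hD _)
    rw [Fin.prod_univ_succ, Fin.prod_univ_succ, Fin.sum_univ_succ]
    have split : a 0 * ∏ i : Fin n, a i.succ - b 0 * ∏ i : Fin n, b i.succ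
        = a 0 * (∏ i : Fin n, a i.succ - ∏ i : Fin n, b i.succ)
          + (a 0 - b 0) * ∏ i : Fin n, b i.succ := by ring
    rw [split]
    refine (abs_add_le _ _).trans ?_
    rw [abs_mul, abs_mul]
    have t1 := mul_le_mul (hA 0) ih' (abs_nonneg _) hA0
    have t2 := mul_le_mul (hD 0) hPb (abs_nonneg _) hD0
    refine (add_le_add t1 t2).trans (le_of_eq ?_)
    rw [Finset.mul_sum, add_comm]
    congr 1
    · rw [filter_lt_zero_eq, prod_filter_zero_lt, Finset.prod_empty]
      ring
    · refine Finset.sum_congr rfl fun k _ => ?_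
      rw [prod_filter_lt_succ, prod_filter_succ_lt]
      ring

/-! ### Volume of the simplex -/

lemma isClosed_simplex (a b : ℝ) (n : ℕ) : IsClosed (simplex a b n) := by
  have h1 : IsClosed {r : Fin n → ℝ | ∀ i, a ≤ r i ∧ r i ≤ b} := by
    have : {r : Fin n → ℝ | ∀ i, a ≤ r i ∧ r i ≤ b}
        = ⋂ i, ((fun r : Fin n → ℝ => r i) ⁻¹' Set.Icc a b) := by
      ext r; simp [Set.mem_Icc]
    rw [this]
    exact isClosed_iInter fun i => isClosed_Icc.preimage (continuous_apply i)
  have h2 : IsClosed {r : Fin n → ℝ | ∀ i j : Fin n, i ≤ j → r i ≤ r j} := by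
    have : {r : Fin n → ℝ | ∀ i j : Fin n, i ≤ j → r i ≤ r j}
        = ⋂ (i) (j), {r : Fin n → ℝ | i ≤ j → r i ≤ r j} := by ext r; simp
    rw [this]
    refine isClosed_iInter fun i => isClosed_iInter fun j => ?_
    by_cases hij : i ≤ j
    · have : {r : Fin n → ℝ | i ≤ j → r i ≤ r j} = {r | r i ≤ r j} := by
        ext r; simp [hij]
      rw [this]
      exact isClosed_le (continuous_apply i) (continuous_apply j)
    · have : {r : Fin n → ℝ | i ≤ j → r i ≤ r j} = Set.univ := by
        ext r; simp [hij]
      rw [this]; exact isClosed_univ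
  exact h1.inter h2

lemma measurePreserving_comp_perm (n : ℕ) (σ : Equiv.Perm (Fin n)) :
    MeasurePreserving (fun r : Fin n → ℝ => r ∘ σ) volume volume := by
  have h := volume_measurePreserving_piCongrLeft (fun _ : Fin n => ℝ) σ.symm
  have he : ⇑(MeasurableEquiv.piCongrLeft (fun _ : Fin n => ℝ) σ.symm)
      = fun r : Fin n → ℝ => r ∘ σ := by
    funext r
    funext a
    have := Equiv.piCongrLeft_apply_apply (fun _ : Fin n => ℝ) σ.symm r (σ a)
    simpa [MeasurableEquiv.coe_piCongrLeft] using this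
  rwa [he] at h

lemma null_eq_diag (n : ℕ) (i j : Fin n) (hij : i ≠ j) :
    volume {r : Fin n → ℝ | r i = r j} = 0 := by
  classical
  have h := volume_preserving_piEquivPiSubtypeProd (fun _ : Fin n => ℝ) (fun k => k = i)
  set e := MeasurableEquiv.piEquivPiSubtypeProd (fun _ : Fin n => ℝ) (fun k => k = i)
  have hT : MeasurableSet {q : ({k : Fin n // k = i} → ℝ) × ({k : Fin n // ¬ k = i} → ℝ) |
      q.1 ⟨i, rfl⟩ = q.2 ⟨j, fun h => hij h.symm⟩} := by
    apply measurableSet_eq_fun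
    · exact (measurable_pi_apply _).comp measurable_fst
    · exact (measurable_pi_apply _).comp measurable_snd
  have hpre : {r : Fin n → ℝ | r i = r j} = e ⁻¹' {q | q.1 ⟨i, rfl⟩ = q.2 ⟨j, fun h => hij h.symm⟩} := by
    ext r
    simp [e, MeasurableEquiv.piEquivPiSubtypeProd, Equiv.piEquivPiSubtypeProd]
  rw [hpre, h.measure_preimage hT.nullMeasurableSet, Measure.volume_eq_prod,
    Measure.prod_apply hT]
  have hz : ∀ x : {k : Fin n // k = i} → ℝ,
      (volume : Measure ({k : Fin n // ¬ k = i} → ℝ))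
        {y | x ⟨i, rfl⟩ = y ⟨j, fun h => hij h.symm⟩} = 0 := by
    intro x
    have hset : {y : {k : Fin n // ¬ k = i} → ℝ | x ⟨i, rfl⟩ = y ⟨j, fun h => hij h.symm⟩}
        = (fun y : {k : Fin n // ¬ k = i} → ℝ => y ⟨j, fun h => hij h.symm⟩) ⁻¹' {x ⟨i, rfl⟩} := by
      ext y; simp [eq_comm]
    rw [hset, volume_pi]
    exact Measure.pi_hyperplane _ _ _
  simp [hz]

lemma perm_eq_of_inj (n : ℕ) (r : Fin n → ℝ) (hinj : Function.Injective r)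
    (σ π : Equiv.Perm (Fin n)) (hσ : Monotone (r ∘ σ)) (hπ : Monotone (r ∘ π)) :
    σ = π := by
  have hsσ : StrictMono (r ∘ σ) := hσ.strictMono_of_injective (hinj.comp σ.injective)
  have hsπ : StrictMono (r ∘ π) := hπ.strictMono_of_injective (hinj.comp π.injective)
  set E : Equiv.Perm (Fin n) := σ.trans π.symm with hE
  have hcomp : ∀ k, (r ∘ π) (E k) = (r ∘ σ) k := by
    intro k; simp [hE, Function.comp]
  have he : StrictMono (⇑E) := by
    intro i j hij
    have h1 : (r ∘ π) (E i) < (r ∘ π) (E j) := by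
      rw [hcomp, hcomp]; exact hsσ hij
    by_contra hle
    exact absurd h1 (not_lt.2 (hπ (not_lt.1 hle)))
  have hrange : Set.range (⇑E) = Set.range (id : Fin n → Fin n) := by
    rw [Set.range_id, Set.range_eq_univ]
    exact E.surjective
  have : (⇑E) = id := (he.range_inj strictMono_id).mp hrange
  refine Equiv.ext fun k => ?_
  have := congrFun this k
  simp [hE] at this
  exact (Equiv.symm_apply_eq π).1 this

lemma volume_simplex_le (a b : ℝ) (n : ℕ) :
    (n.factorial : ℝ≥0∞) * volume (simplex a b n) ≤ (ENNReal.ofReal (b - a)) ^ n := by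
  classical
  set Δ := simplex a b n with hΔ
  have hΔm : MeasurableSet Δ := (isClosed_simplex a b n).measurableSet
  set A : Equiv.Perm (Fin n) → Set (Fin n → ℝ) := fun σ => (fun r => r ∘ σ) ⁻¹' Δ with hA
  have hmes : ∀ σ, volume (A σ) = volume Δ := fun σ =>
    (measurePreserving_comp_perm n σ).measure_preimage hΔm.nullMeasurableSet
  have hsub : ∀ σ, A σ ⊆ Set.pi Set.univ (fun _ : Fin n => Set.Icc a b) := by
    intro σ r hr k _
    have h := (hr.1 (σ.symm k))
    simpa using h
  have hN : volume (⋃ (i : Fin n) (j : Fin n) (_ : i ≠ j), {r : Fin n → ℝ | r i = r j}) = 0 := by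
    refine measure_iUnion_null fun i => measure_iUnion_null fun j => measure_iUnion_null fun hij => ?_
    exact null_eq_diag n i j hij
  have hdisj : Set.Pairwise (↑(Finset.univ : Finset (Equiv.Perm (Fin n))))
      (Function.onFun (MeasureTheory.AEDisjoint volume) A) := by
    intro σ _ π _ hne
    refine measure_mono_null ?_ hN
    intro r hr
    by_contra hmem
    simp only [Set.mem_iUnion, not_exists] at hmem
    have hinj : Function.Injective r := by
      intro i j hij
      by_contra hij'
      exact hmem i j hij' hij
    have h1 : Monotone (r ∘ σ) := fun i j hij => hr.1.2 i j hij
    have h2 : Monotone (r ∘ π) := fun i j hij => hr.2.2 i j hij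
    exact hne (perm_eq_of_inj n r hinj σ π h1 h2)
  have hsum : ∑ σ : Equiv.Perm (Fin n), volume (A σ)
      = volume (⋃ σ ∈ (Finset.univ : Finset (Equiv.Perm (Fin n))), A σ) :=
    (measure_biUnion_finset₀ hdisj fun σ _ =>
      (hΔm.preimage (measurePreserving_comp_perm n σ).measurable).nullMeasurableSet).symm
  have hcard : ∑ σ : Equiv.Perm (Fin n), volume (A σ) = (n.factorial : ℝ≥0∞) * volume Δ := by
    simp only [hmes, Finset.sum_const, Finset.card_univ, Fintype.card_perm, Fintype.card_fin,
      nsmul_eq_mul]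
  calc (n.factorial : ℝ≥0∞) * volume Δ
      = volume (⋃ σ ∈ (Finset.univ : Finset (Equiv.Perm (Fin n))), A σ) := by rw [← hcard, hsum]
    _ ≤ volume (Set.pi Set.univ (fun _ : Fin n => Set.Icc a b)) :=
        measure_mono (Set.iUnion₂_subset fun σ _ => hsub σ)
    _ = (ENNReal.ofReal (b - a)) ^ n := by
        rw [volume_pi_pi]
        simp [Real.volume_Icc]

lemma volume_simplex_le' {T a b : ℝ} (hT : 0 ≤ T) (ha : 0 ≤ a) (hb : b ≤ T) (n : ℕ) :
    volume (simplex a b n) ≤ ENNReal.ofReal (T ^ n / (n.factorial : ℝ)) := by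
  have hfac0 : ((n.factorial : ℝ)) ≠ 0 := by exact_mod_cast n.factorial_ne_zero
  have h0 : (n.factorial : ℝ≥0∞) ≠ 0 := by
    exact_mod_cast Nat.cast_ne_zero.mpr n.factorial_ne_zero
  have htop : (n.factorial : ℝ≥0∞) ≠ ⊤ := ENNReal.natCast_ne_top _
  have key : (n.factorial : ℝ≥0∞) * volume (simplex a b n) ≤ ENNReal.ofReal (T ^ n) := by
    refine (volume_simplex_le a b n).trans ?_
    calc ENNReal.ofReal (b - a) ^ n ≤ ENNReal.ofReal T ^ n :=
          pow_le_pow_left' (ENNReal.ofReal_le_ofReal (by linarith)) n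
      _ = ENNReal.ofReal (T ^ n) := (ENNReal.ofReal_pow hT n).symm
  have hsplit : ENNReal.ofReal (T ^ n)
      = (n.factorial : ℝ≥0∞) * ENNReal.ofReal (T ^ n / (n.factorial : ℝ)) := by
    rw [← ENNReal.ofReal_natCast, ← ENNReal.ofReal_mul (by positivity)]
    congr 1
    field_simp
  rw [hsplit] at key
  exact (ENNReal.mul_le_mul_iff_right h0 htop).mp key

/-- local Lipschitz estimate for the full 2D signature in the `C²` norm. -/
theorem stmt10 {d : ℕ} (T : ℝ) (hT : 0 ≤ T) (X Xt : Fin d → ℝ × ℝ → ℝ)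
    (hX : ∀ i, ContDiff ℝ 2 (X i)) (hXt : ∀ i, ContDiff ℝ 2 (Xt i))
    {n : ℕ} (w : Fin n → Fin d) (τ : Equiv.Perm (Fin n))
    (s1 s2 t1 t2 : ℝ) (hs1 : 0 ≤ s1) (h1 : s1 ≤ t1) (ht1 : t1 ≤ T)
    (hs2 : 0 ≤ s2) (h2 : s2 ≤ t2) (ht2 : t2 ≤ T) :
    |sigFull X s1 s2 t1 t2 w τ - sigFull Xt s1 s2 t1 t2 w τ| ≤
      T ^ (2 * n) / (n.factorial : ℝ) ^ 2 *
        ∑ k : Fin n,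
          (∏ i ∈ Finset.univ.filter fun i : Fin n => i < k, C2norm (X (w i)) T) *
          (∏ j ∈ Finset.univ.filter fun j : Fin n => k < j, C2norm (Xt (w j)) T) *
          C2norm (fun p => X (w k) p - Xt (w k) p) T := by
  classical
  set S := simplex2 s1 t1 s2 t2 n with hS
  set F : (Fin n → ℝ) × (Fin n → ℝ) → ℝ := fun p => ∏ i, d12 (X (w i)) (p.1 i, p.2 (τ i))
  set G : (Fin n → ℝ) × (Fin n → ℝ) → ℝ := fun p => ∏ i, d12 (Xt (w i)) (p.1 i, p.2 (τ i))
  set C := ∑ k : Fin n,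
      (∏ i ∈ Finset.univ.filter fun i : Fin n => i < k, C2norm (X (w i)) T) *
      (∏ j ∈ Finset.univ.filter fun j : Fin n => k < j, C2norm (Xt (w j)) T) *
      C2norm (fun p => X (w k) p - Xt (w k) p) T with hC
  -- topology of S
  have hSclosed : IsClosed S :=
    ((isClosed_simplex s1 t1 n).preimage continuous_fst).inter
      ((isClosed_simplex s2 t2 n).preimage continuous_snd)
  have hK : IsCompact ((Set.pi Set.univ fun _ : Fin n => Set.Icc s1 t1) ×ˢ
      (Set.pi Set.univ fun _ : Fin n => Set.Icc s2 t2)) :=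
    (isCompact_univ_pi fun _ => isCompact_Icc).prod (isCompact_univ_pi fun _ => isCompact_Icc)
  have hSsub : S ⊆ (Set.pi Set.univ fun _ : Fin n => Set.Icc s1 t1) ×ˢ
      (Set.pi Set.univ fun _ : Fin n => Set.Icc s2 t2) := by
    rintro p ⟨hp1, hp2⟩
    exact ⟨fun i _ => hp1.1 i, fun i _ => hp2.1 i⟩
  have hScompact : IsCompact S := hK.of_isClosed_subset hSclosed hSsub
  -- continuity and integrability
  have hFcont : Continuous F :=
    continuous_finset_prod _ fun i _ => (d12_continuous _ (hX _)).comp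
      (((continuous_apply i).comp continuous_fst).prodMk
        ((continuous_apply (τ i)).comp continuous_snd))
  have hGcont : Continuous G :=
    continuous_finset_prod _ fun i _ => (d12_continuous _ (hXt _)).comp
      (((continuous_apply i).comp continuous_fst).prodMk
        ((continuous_apply (τ i)).comp continuous_snd))
  have hFint : IntegrableOn F S volume := hFcont.continuousOn.integrableOn_compact hScompact
  have hGint : IntegrableOn G S volume := hGcont.continuousOn.integrableOn_compact hScompact
  -- pointwise bound on S
  have hCbound : ∀ p ∈ S, ‖F p - G p‖ ≤ C := by
    intro p hp
    have hq : ∀ i : Fin n, ((p.1 i, p.2 (τ i)) : ℝ × ℝ) ∈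
        Set.Icc (0:ℝ) T ×ˢ Set.Icc (0:ℝ) T := by
      intro i
      have h1' := hp.1.1 i
      have h2' := hp.2.1 (τ i)
      exact ⟨⟨by linarith [h1'.1], by linarith [h1'.2]⟩, ⟨by linarith [h2'.1], by linarith [h2'.2]⟩⟩
    rw [Real.norm_eq_abs]
    refine prod_sub_prod_bound n (fun i => d12 (X (w i)) (p.1 i, p.2 (τ i)))
      (fun i => d12 (Xt (w i)) (p.1 i, p.2 (τ i)))
      (fun i => C2norm (X (w i)) T) (fun j => C2norm (Xt (w j)) T)
      (fun k => C2norm (fun q => X (w k) q - Xt (w k) q) T) ?_ ?_ ?_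
    · exact fun i => d12_abs_le_C2norm _ (hX _) (hq i)
    · exact fun i => d12_abs_le_C2norm _ (hXt _) (hq i)
    · intro i
      rw [d12_sub _ _ (hX _) (hXt _)]
      exact d12_abs_le_C2norm _ ((hX _).sub (hXt _)) (hq i)
  have hCnonneg : 0 ≤ C := by
    refine Finset.sum_nonneg fun k _ => ?_
    have hXk : ∀ i : Fin n, 0 ≤ C2norm (X (w i)) T := fun i => C2norm_nonneg _ (hX _) hT
    have hXtk : ∀ j : Fin n, 0 ≤ C2norm (Xt (w j)) T := fun j => C2norm_nonneg _ (hXt _) hT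
    exact mul_nonneg (mul_nonneg (Finset.prod_nonneg fun i _ => hXk i)
      (Finset.prod_nonneg fun j _ => hXtk j))
      (C2norm_nonneg _ ((hX _).sub (hXt _)) hT)
  -- measure bound
  have hvol : volume S = volume (simplex s1 t1 n) * volume (simplex s2 t2 n) := by
    have : S = (simplex s1 t1 n) ×ˢ (simplex s2 t2 n) := rfl
    rw [this, Measure.volume_eq_prod, Measure.prod_prod]
  have hfac0 : ((n.factorial : ℝ) : ℝ) ≠ 0 := by
    exact_mod_cast n.factorial_ne_zero
  have b1 : (volume (simplex s1 t1 n)).toReal ≤ T ^ n / (n.factorial : ℝ) :=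
    ENNReal.toReal_le_of_le_ofReal (by positivity) (volume_simplex_le' hT hs1 ht1 n)
  have b2 : (volume (simplex s2 t2 n)).toReal ≤ T ^ n / (n.factorial : ℝ) :=
    ENNReal.toReal_le_of_le_ofReal (by positivity) (volume_simplex_le' hT hs2 ht2 n)
  have hμreal : (volume S).toReal ≤ T ^ (2 * n) / (n.factorial : ℝ) ^ 2 := by
    calc (volume S).toReal
        = (volume (simplex s1 t1 n)).toReal * (volume (simplex s2 t2 n)).toReal := by
          rw [hvol, ENNReal.toReal_mul]
      _ ≤ (T ^ n / (n.factorial : ℝ)) * (T ^ n / (n.factorial : ℝ)) :=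
          mul_le_mul b1 b2 ENNReal.toReal_nonneg (by positivity)
      _ = T ^ (2 * n) / (n.factorial : ℝ) ^ 2 := by
          rw [two_mul, pow_add]; ring
  have hμfin : volume S < ⊤ := hScompact.measure_lt_top
  -- combine
  have hdiff : sigFull X s1 s2 t1 t2 w τ - sigFull Xt s1 s2 t1 t2 w τ
      = ∫ p in S, (F p - G p) := by
    rw [integral_sub hFint hGint]
    rfl
  rw [hdiff]
  calc |∫ p in S, (F p - G p)| ≤ C * (volume S).toReal := by
        have := norm_setIntegral_le_of_norm_le_const hμfin hCbound
        simpa [measureReal_def] using this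
    _ ≤ C * (T ^ (2 * n) / (n.factorial : ℝ) ^ 2) :=
        mul_le_mul_of_nonneg_left hμreal hCnonneg
    _ = T ^ (2 * n) / (n.factorial : ℝ) ^ 2 * C := mul_comm _ _
end

section
/- Let $X \in C^2([0,T]^2;\mathbb{R}^d)$ and $w = (i_1,\dots,i_n)$ a word. Then the product of rectangular increments satisfies $\prod_{k=1}^n \square_{\mathbf{s}\mathbf{t}}X^{w_k} = \sum_{\nu,\nu' \in \Sigma_n} \langle \mathbf{S}_{\mathbf{s}\mathbf{t}}(X), (w_\nu, \nu')\rangle$, where $w_\nu = (w_{\nu(1)},\dots,w_{\nu(n)})$ and $\square_{\mathbf{s}\mathbf{t}}X^i$ denotes the rectangular increment of the $i$-th coordinate. -/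
open MeasureTheory

section aux
open Set

section analysis

variable {g : ℝ × ℝ → ℝ}

lemma hda2 (hg : Differentiable ℝ g) (a b : ℝ) :
    HasDerivAt (fun y => g (a, y)) (fderiv ℝ g (a, b) (0, 1)) b := by
  have h1 : HasDerivAt (fun y : ℝ => (a, y)) ((0 : ℝ), (1 : ℝ)) b :=
    HasDerivAt.prodMk (hasDerivAt_const b a) (hasDerivAt_id b)
  exact ((hg (a, b)).hasFDerivAt.comp_hasDerivAt b h1)

lemma hda1 (hg : Differentiable ℝ g) (a b : ℝ) :
    HasDerivAt (fun x => g (x, b)) (fderiv ℝ g (a, b) (1, 0)) a := by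
  have h1 : HasDerivAt (fun x : ℝ => (x, b)) ((1 : ℝ), (0 : ℝ)) a :=
    HasDerivAt.prodMk (hasDerivAt_id a) (hasDerivAt_const a b)
  exact ((hg (a, b)).hasFDerivAt.comp_hasDerivAt a h1)

/-- the function `∂₂ g`. -/
noncomputable def phi2 (g : ℝ × ℝ → ℝ) : ℝ × ℝ → ℝ := fun p => fderiv ℝ g p (0, 1)

lemma phi2_contDiff (hg : ContDiff ℝ 2 g) : ContDiff ℝ 1 (phi2 g) :=
  (hg.fderiv_right (le_refl _)).clm_apply contDiff_const

lemma d12_eq_s13 (hg : ContDiff ℝ 2 g) :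
    d12 g = fun p => fderiv ℝ (phi2 g) p (1, 0) := by
  have hdiff : Differentiable ℝ g := hg.differentiable (by norm_num)
  have hφ : Differentiable ℝ (phi2 g) := (phi2_contDiff hg).differentiable one_ne_zero
  funext p
  have h1 : (fun x => deriv (fun y => g (x, y)) p.2) = fun x => phi2 g (x, p.2) :=
    funext fun x => (hda2 hdiff x p.2).deriv
  show deriv (fun a => deriv (fun b => g (a, b)) p.2) p.1 = _
  rw [h1]
  exact (hda1 hφ p.1 p.2).deriv

lemma d12_hasDerivAt (hg : ContDiff ℝ 2 g) (a b : ℝ) :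
    HasDerivAt (fun x => phi2 g (x, b)) (d12 g (a, b)) a := by
  rw [d12_eq_s13 hg]
  exact hda1 ((phi2_contDiff hg).differentiable one_ne_zero) a b

lemma d12_continuous_s13 (hg : ContDiff ℝ 2 g) : Continuous (d12 g) := by
  rw [d12_eq_s13 hg]
  exact ((phi2_contDiff hg).continuous_fderiv one_ne_zero).clm_apply continuous_const

lemma rect_eq (hg : ContDiff ℝ 2 g) {s1 t1 s2 t2 : ℝ} (h1 : s1 ≤ t1) (h2 : s2 ≤ t2) :
    g (t1, t2) - g (s1, t2) - g (t1, s2) + g (s1, s2)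
      = ∫ z in Icc s1 t1 ×ˢ Icc s2 t2, d12 g z := by
  have hdiff : Differentiable ℝ g := hg.differentiable (by norm_num)
  have hφc : Continuous (phi2 g) := (phi2_contDiff hg).continuous
  have hd12c : Continuous (d12 g) := d12_continuous_s13 hg
  -- inner FTC
  have e2 : ∀ b : ℝ, phi2 g (t1, b) - phi2 g (s1, b) = ∫ a in s1..t1, d12 g (a, b) := by
    intro b
    refine (intervalIntegral.integral_eq_sub_of_hasDerivAt
      (fun x _ => d12_hasDerivAt hg x b) ?_).symm
    exact (hd12c.comp (continuous_id.prodMk continuous_const)).intervalIntegrable _ _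
  -- outer FTC
  have hG : ∀ b : ℝ, HasDerivAt (fun y => g (t1, y) - g (s1, y))
      (phi2 g (t1, b) - phi2 g (s1, b)) b := fun b =>
    (hda2 hdiff t1 b).sub (hda2 hdiff s1 b)
  have e1 : g (t1, t2) - g (s1, t2) - (g (t1, s2) - g (s1, s2))
      = ∫ b in s2..t2, (phi2 g (t1, b) - phi2 g (s1, b)) := by
    refine (intervalIntegral.integral_eq_sub_of_hasDerivAt (fun b _ => hG b) ?_).symm
    exact (((hφc.comp (continuous_const.prodMk continuous_id)).sub
      (hφc.comp (continuous_const.prodMk continuous_id)))).intervalIntegrable _ _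
  have key : g (t1, t2) - g (s1, t2) - g (t1, s2) + g (s1, s2)
      = ∫ b in s2..t2, ∫ a in s1..t1, d12 g (a, b) := by
    rw [show g (t1, t2) - g (s1, t2) - g (t1, s2) + g (s1, s2)
        = g (t1, t2) - g (s1, t2) - (g (t1, s2) - g (s1, s2)) by ring, e1]
    exact intervalIntegral.integral_congr fun b _ => e2 b
  -- integrability on the rectangle
  have hint : IntegrableOn (d12 g) (Icc s1 t1 ×ˢ Icc s2 t2) volume :=
    hd12c.continuousOn.integrableOn_compact (isCompact_Icc.prod isCompact_Icc)
  have hint' : Integrable (Function.uncurry fun a b => d12 g (a, b))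
      ((volume.restrict (Icc s1 t1)).prod (volume.restrict (Icc s2 t2))) := by
    rw [Measure.prod_restrict]; exact hint
  have hswap : ∫ b in Icc s2 t2, ∫ a in Icc s1 t1, d12 g (a, b)
      = ∫ a in Icc s1 t1, ∫ b in Icc s2 t2, d12 g (a, b) :=
    integral_integral_swap hint'.swap
  have hrect : ∫ z in Icc s1 t1 ×ˢ Icc s2 t2, d12 g z
      = ∫ a in Icc s1 t1, ∫ b in Icc s2 t2, d12 g (a, b) := by
    exact setIntegral_prod _ hint
  rw [key, hrect, ← hswap, intervalIntegral.integral_of_le h2,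
    ← integral_Icc_eq_integral_Ioc]
  refine setIntegral_congr_fun measurableSet_Icc fun b _ => ?_
  rw [intervalIntegral.integral_of_le h1, ← integral_Icc_eq_integral_Ioc]

end analysis

section combinat

variable {n : ℕ} {a b : ℝ}

lemma measurableSet_simplex : MeasurableSet (simplex a b n) := by
  have : simplex a b n =
      ((⋂ i, {r : Fin n → ℝ | a ≤ r i}) ∩ ⋂ i, {r : Fin n → ℝ | r i ≤ b}) ∩
        ⋂ (i) (j) (_ : i ≤ j), {r : Fin n → ℝ | r i ≤ r j} := by
    ext r
    simp only [simplex, Set.mem_setOf_eq, Set.mem_inter_iff, Set.mem_iInter, forall_and]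
  rw [this]
  refine (MeasurableSet.inter (MeasurableSet.inter ?_ ?_) ?_)
  · exact MeasurableSet.iInter fun i =>
      measurableSet_le measurable_const (measurable_pi_apply i)
  · exact MeasurableSet.iInter fun i =>
      measurableSet_le (measurable_pi_apply i) measurable_const
  · exact MeasurableSet.iInter fun i => MeasurableSet.iInter fun j =>
      MeasurableSet.iInter fun _ =>
        measurableSet_le (measurable_pi_apply i) (measurable_pi_apply j)

lemma hyper_null {i j : Fin n} (hij : i ≠ j) :
    volume {x : Fin n → ℝ | x i = x j} = 0 := by
  set L : (Fin n → ℝ) →ₗ[ℝ] ℝ := (LinearMap.proj i : (Fin n → ℝ) →ₗ[ℝ] ℝ) - (LinearMap.proj j : (Fin n → ℝ) →ₗ[ℝ] ℝ) with hL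
  have hset : {x : Fin n → ℝ | x i = x j} = (LinearMap.ker L : Set (Fin n → ℝ)) := by
    ext x
    simp [hL, LinearMap.mem_ker, sub_eq_zero]
  rw [hset]
  refine Measure.addHaar_submodule volume _ (fun htop => ?_)
  have h1 : L (Pi.single i 1) = 1 := by
    simp [hL, Pi.single_eq_same, Pi.single_eq_of_ne (Ne.symm hij)]
  rw [LinearMap.ker_eq_top] at htop
  rw [htop] at h1
  simpa using h1

lemma noninj_null :
    volume {x : Fin n → ℝ | ∃ i j : Fin n, i ≠ j ∧ x i = x j} = 0 := by
  refine measure_mono_null (fun x hx => ?_)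
    (measure_iUnion_null (fun i : Fin n => measure_iUnion_null fun j : Fin n => ?_)
      : volume (⋃ (i : Fin n) (j : Fin n), {x : Fin n → ℝ | i ≠ j ∧ x i = x j}) = 0)
  · obtain ⟨i, j, hij, hxy⟩ := hx
    exact Set.mem_iUnion.2 ⟨i, Set.mem_iUnion.2 ⟨j, hij, hxy⟩⟩
  · by_cases hij : i = j
    · simp [hij]
    · exact measure_mono_null (fun x hx => hx.2) (hyper_null hij)

end combinat

section decomp

variable {n : ℕ} {s1 t1 s2 t2 : ℝ}

/-- the "sector" associated to a pair of permutations. -/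
def Asec (s1 t1 s2 t2 : ℝ) (n : ℕ) (στ : Equiv.Perm (Fin n) × Equiv.Perm (Fin n)) :
    Set ((Fin n → ℝ) × (Fin n → ℝ)) :=
  {p | (p.1 ∘ στ.1) ∈ simplex s1 t1 n ∧ (p.2 ∘ στ.2) ∈ simplex s2 t2 n}

lemma measurableSet_Asec (στ : Equiv.Perm (Fin n) × Equiv.Perm (Fin n)) :
    MeasurableSet (Asec s1 t1 s2 t2 n στ) := by
  have h1 : Measurable fun p : (Fin n → ℝ) × (Fin n → ℝ) => p.1 ∘ στ.1 :=
    measurable_pi_lambda _ fun i => (measurable_pi_apply _).comp measurable_fst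
  have h2 : Measurable fun p : (Fin n → ℝ) × (Fin n → ℝ) => p.2 ∘ στ.2 :=
    measurable_pi_lambda _ fun i => (measurable_pi_apply _).comp measurable_snd
  exact (h1 measurableSet_simplex).inter (h2 measurableSet_simplex)

lemma Asec_union :
    (⋃ στ : Equiv.Perm (Fin n) × Equiv.Perm (Fin n), Asec s1 t1 s2 t2 n στ) =
      (Set.univ.pi fun _ : Fin n => Set.Icc s1 t1) ×ˢ
        (Set.univ.pi fun _ : Fin n => Set.Icc s2 t2) := by
  ext p
  simp only [Set.mem_iUnion, Set.mem_prod, Set.mem_univ_pi]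
  constructor
  · rintro ⟨⟨σ, τ⟩, ⟨h1, h2⟩⟩
    constructor
    · intro k
      have := (h1.1 (σ.symm k))
      simpa using this
    · intro k
      have := (h2.1 (τ.symm k))
      simpa using this
  · rintro ⟨h1, h2⟩
    refine ⟨⟨Tuple.sort p.1, Tuple.sort p.2⟩, ⟨⟨fun i => h1 _, ?_⟩, ⟨fun i => h2 _, ?_⟩⟩⟩
    · exact fun i j hij => Tuple.monotone_sort p.1 hij
    · exact fun i j hij => Tuple.monotone_sort p.2 hij

lemma Asec_aedisjoint :
    Pairwise (Function.onFun (MeasureTheory.AEDisjoint volume) (Asec s1 t1 s2 t2 n)) := by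
  intro στ στ' hne
  have hsub : Asec s1 t1 s2 t2 n στ ∩ Asec s1 t1 s2 t2 n στ' ⊆
      ({x : Fin n → ℝ | ∃ i j : Fin n, i ≠ j ∧ x i = x j} ×ˢ Set.univ) ∪
        (Set.univ ×ˢ {y : Fin n → ℝ | ∃ i j : Fin n, i ≠ j ∧ y i = y j}) := by
    rintro p ⟨⟨ha1, ha2⟩, ⟨hb1, hb2⟩⟩
    by_contra hcon
    simp only [Set.mem_union, Set.mem_prod, Set.mem_univ, and_true, true_and,
      Set.mem_setOf_eq, not_or, not_exists, not_and] at hcon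
    have hinj1 : Function.Injective p.1 := by
      intro i j hij
      by_contra hne'
      exact hcon.1 i j hne' hij
    have hinj2 : Function.Injective p.2 := by
      intro i j hij
      by_contra hne'
      exact hcon.2 i j hne' hij
    have hm1 : p.1 ∘ στ.1 = p.1 ∘ στ'.1 :=
      Tuple.unique_monotone (fun i j hij => ha1.2 i j hij) (fun i j hij => hb1.2 i j hij)
    have hm2 : p.2 ∘ στ.2 = p.2 ∘ στ'.2 :=
      Tuple.unique_monotone (fun i j hij => ha2.2 i j hij) (fun i j hij => hb2.2 i j hij)
    apply hne
    have e1 : στ.1 = στ'.1 := Equiv.ext fun i => hinj1 (congrFun hm1 i)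
    have e2 : στ.2 = στ'.2 := Equiv.ext fun i => hinj2 (congrFun hm2 i)
    exact Prod.ext e1 e2
  refine measure_mono_null (Set.inter_subset_inter le_rfl le_rfl |>.trans hsub) ?_
  refine measure_union_null ?_ ?_
  · rw [Measure.volume_eq_prod, Measure.prod_prod, noninj_null, zero_mul]
  · rw [Measure.volume_eq_prod, Measure.prod_prod, noninj_null, mul_zero]

end decomp

lemma measurableSet_simplex2 {s1 t1 s2 t2 : ℝ} {n : ℕ} :
    MeasurableSet (simplex2 s1 t1 s2 t2 n) := by
  have : simplex2 s1 t1 s2 t2 n =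
      (Prod.fst ⁻¹' simplex s1 t1 n) ∩ (Prod.snd ⁻¹' simplex s2 t2 n) := rfl
  rw [this]
  exact (measurable_fst measurableSet_simplex).inter (measurable_snd measurableSet_simplex)

lemma Asec_integral {d n : ℕ} (X : Fin d → ℝ × ℝ → ℝ) (w : Fin n → Fin d)
    (s1 t1 s2 t2 : ℝ) (ν ν' : Equiv.Perm (Fin n)) :
    ∫ p in Asec s1 t1 s2 t2 n (ν, ν'.symm.trans ν),
        ∏ k, d12 (X (w k)) (p.1 k, p.2 k)
      = sigFull X s1 s2 t1 t2 (w ∘ ν) ν' := by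
  classical
  set τ : Equiv.Perm (Fin n) := ν'.symm.trans ν with hτ
  set e1 : (Fin n → ℝ) ≃ᵐ (Fin n → ℝ) :=
    MeasurableEquiv.arrowCongr' ν (MeasurableEquiv.refl ℝ) with he1
  set e2 : (Fin n → ℝ) ≃ᵐ (Fin n → ℝ) :=
    MeasurableEquiv.arrowCongr' τ (MeasurableEquiv.refl ℝ) with he2
  have he1app : ∀ (x : Fin n → ℝ) (i : Fin n), e1 x i = x (ν.symm i) := by
    intro x i
    simp [he1, MeasurableEquiv.arrowCongr', Equiv.arrowCongr', Equiv.arrowCongr]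
  have he2app : ∀ (y : Fin n → ℝ) (i : Fin n), e2 y i = y (τ.symm i) := by
    intro y i
    simp [he2, MeasurableEquiv.arrowCongr', Equiv.arrowCongr', Equiv.arrowCongr]
  have hmp : MeasurePreserving (Prod.map e1 e2)
      (volume : Measure ((Fin n → ℝ) × (Fin n → ℝ))) volume :=
    (volume_preserving_arrowCongr' ν (MeasurableEquiv.refl ℝ)
      (MeasurePreserving.id _)).prod
      (volume_preserving_arrowCongr' τ (MeasurableEquiv.refl ℝ)
        (MeasurePreserving.id _))
  have hemb : MeasurableEmbedding (Prod.map ⇑e1 ⇑e2) :=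
    (MeasurableEquiv.prodCongr e1 e2).measurableEmbedding
  have hpre : (Prod.map ⇑e1 ⇑e2) ⁻¹' (Asec s1 t1 s2 t2 n (ν, τ))
      = simplex2 s1 t1 s2 t2 n := by
    ext p
    have h1 : (e1 p.1) ∘ ν = p.1 := funext fun i => by simp [he1app]
    have h2 : (e2 p.2) ∘ τ = p.2 := funext fun i => by simp [he2app]
    show (e1 p.1 ∘ ⇑ν ∈ simplex s1 t1 n ∧ e2 p.2 ∘ ⇑τ ∈ simplex s2 t2 n) ↔ _
    rw [h1, h2]
    rfl
  have key := hmp.setIntegral_preimage_emb hemb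
    (fun p => ∏ k, d12 (X (w k)) (p.1 k, p.2 k)) (Asec s1 t1 s2 t2 n (ν, τ))
  rw [hpre] at key
  rw [← key, sigFull]
  refine setIntegral_congr_fun measurableSet_simplex2 (fun p _ => ?_)
  show (∏ k, d12 (X (w k)) (e1 p.1 k, e2 p.2 k)) = _
  have hg : ∀ k, d12 (X (w k)) (e1 p.1 k, e2 p.2 k)
      = d12 (X (w k)) (p.1 (ν.symm k), p.2 (ν' (ν.symm k))) := by
    intro k
    rw [he1app, he2app]
    have : τ.symm k = ν' (ν.symm k) := by simp [hτ]
    rw [this]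
  rw [Finset.prod_congr rfl (fun k _ => hg k),
    ← Equiv.prod_comp ν (fun k => d12 (X (w k)) (p.1 (ν.symm k), p.2 (ν' (ν.symm k))))]
  exact Finset.prod_congr rfl (fun i _ => by simp)

end aux

/-- the product of rectangular increments equals the sum of full 2D
signature coefficients over all pairs of permutations:
`∏ₖ □_{s,t} X^{wₖ} = ∑_{ν,ν'} ⟨S_{s,t}(X),(w_ν, ν')⟩`. -/
theorem stmt13 {d : ℕ} (T : ℝ) (X : Fin d → ℝ × ℝ → ℝ) (hX : ∀ i, ContDiff ℝ 2 (X i))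
    {n : ℕ} (w : Fin n → Fin d)
    (s1 s2 t1 t2 : ℝ) (hs1 : 0 ≤ s1) (h1 : s1 ≤ t1) (ht1 : t1 ≤ T)
    (hs2 : 0 ≤ s2) (h2 : s2 ≤ t2) (ht2 : t2 ≤ T) :
    (∏ k : Fin n,
        (X (w k) (t1, t2) - X (w k) (s1, t2) - X (w k) (t1, s2) + X (w k) (s1, s2))) =
      ∑ ν : Equiv.Perm (Fin n), ∑ ν' : Equiv.Perm (Fin n),
        sigFull X s1 s2 t1 t2 (w ∘ ν) ν' := by
  classical
  have hfc : ∀ k : Fin n, Continuous (d12 (X (w k))) := fun k => d12_continuous_s13 (hX (w k))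
  set R : Set (ℝ × ℝ) := Set.Icc s1 t1 ×ˢ Set.Icc s2 t2 with hR
  have hRm : MeasurableSet R := measurableSet_Icc.prod measurableSet_Icc
  set F : (Fin n → ℝ) × (Fin n → ℝ) → ℝ :=
    fun p => ∏ k, d12 (X (w k)) (p.1 k, p.2 k) with hF
  have hFc : Continuous F := by
    rw [hF]
    exact continuous_finset_prod Finset.univ fun k _ =>
      (hfc k).comp (((continuous_apply k).comp continuous_fst).prodMk
        ((continuous_apply k).comp continuous_snd))
  have hCubem : MeasurableSet ((Set.univ.pi fun _ : Fin n => Set.Icc s1 t1) ×ˢ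
      (Set.univ.pi fun _ : Fin n => Set.Icc s2 t2)) :=
    (MeasurableSet.univ_pi fun _ => measurableSet_Icc).prod
      (MeasurableSet.univ_pi fun _ => measurableSet_Icc)
  have hFint : IntegrableOn F ((Set.univ.pi fun _ : Fin n => Set.Icc s1 t1) ×ˢ
      (Set.univ.pi fun _ : Fin n => Set.Icc s2 t2)) volume :=
    hFc.continuousOn.integrableOn_compact
      ((isCompact_univ_pi fun _ => isCompact_Icc).prod
        (isCompact_univ_pi fun _ => isCompact_Icc))
  calc
    (∏ k : Fin n,
        (X (w k) (t1, t2) - X (w k) (s1, t2) - X (w k) (t1, s2) + X (w k) (s1, s2)))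
      = ∏ k : Fin n, ∫ z : ℝ × ℝ, R.indicator (d12 (X (w k))) z := by
        refine Finset.prod_congr rfl fun k _ => ?_
        rw [rect_eq (hX (w k)) h1 h2, integral_indicator hRm]
    _ = ∫ z : Fin n → ℝ × ℝ, ∏ k, R.indicator (d12 (X (w k))) (z k) :=
        (integral_fintype_prod_eq_prod (fun k => R.indicator (d12 (X (w k))))).symm
    _ = ∫ p : (Fin n → ℝ) × (Fin n → ℝ), ∏ k, R.indicator (d12 (X (w k))) (p.1 k, p.2 k) := by
        rw [← (volume_measurePreserving_arrowProdEquivProdArrow ℝ ℝ (Fin n)).integral_comp'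
          (fun p : (Fin n → ℝ) × (Fin n → ℝ) =>
            ∏ k, R.indicator (d12 (X (w k))) (p.1 k, p.2 k))]
        rfl
    _ = ∫ p : (Fin n → ℝ) × (Fin n → ℝ),
          (((Set.univ.pi fun _ : Fin n => Set.Icc s1 t1) ×ˢ
            (Set.univ.pi fun _ : Fin n => Set.Icc s2 t2)).indicator F) p := by
        congr 1
        funext p
        by_cases hp : p ∈ (Set.univ.pi fun _ : Fin n => Set.Icc s1 t1) ×ˢ
            (Set.univ.pi fun _ : Fin n => Set.Icc s2 t2)
        · rw [Set.indicator_of_mem hp]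
          refine Finset.prod_congr rfl fun k _ =>
            Set.indicator_of_mem ?_ _
          rw [hR]
          exact ⟨hp.1 k (Set.mem_univ k), hp.2 k (Set.mem_univ k)⟩
        · rw [Set.indicator_of_notMem hp]
          have : ∃ k, (p.1 k, p.2 k) ∉ R := by
            by_contra hcon
            push_neg at hcon
            exact hp ⟨fun k _ => (hcon k).1, fun k _ => (hcon k).2⟩
          obtain ⟨k, hk⟩ := this
          exact Finset.prod_eq_zero (Finset.mem_univ k) (Set.indicator_of_notMem hk _)
    _ = ∫ p in (Set.univ.pi fun _ : Fin n => Set.Icc s1 t1) ×ˢ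
          (Set.univ.pi fun _ : Fin n => Set.Icc s2 t2), F p := integral_indicator hCubem
    _ = ∫ p in ⋃ στ : Equiv.Perm (Fin n) × Equiv.Perm (Fin n),
          Asec s1 t1 s2 t2 n στ, F p := by rw [Asec_union]
    _ = ∑' στ : Equiv.Perm (Fin n) × Equiv.Perm (Fin n),
          ∫ p in Asec s1 t1 s2 t2 n στ, F p :=
        integral_iUnion_ae (fun στ => (measurableSet_Asec στ).nullMeasurableSet)
          Asec_aedisjoint (by rw [Asec_union]; exact hFint)
    _ = ∑ στ : Equiv.Perm (Fin n) × Equiv.Perm (Fin n),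
          ∫ p in Asec s1 t1 s2 t2 n στ, F p := tsum_fintype _
    _ = ∑ σ : Equiv.Perm (Fin n), ∑ τ : Equiv.Perm (Fin n),
          ∫ p in Asec s1 t1 s2 t2 n (σ, τ), F p := by rw [Fintype.sum_prod_type]
    _ = ∑ ν : Equiv.Perm (Fin n), ∑ ν' : Equiv.Perm (Fin n),
          sigFull X s1 s2 t1 t2 (w ∘ ν) ν' := by
        refine Finset.sum_congr rfl fun σ _ => ?_
        rw [← Equiv.sum_comp
          ({ toFun := fun ν' => ν'.symm.trans σ
             invFun := fun τ => σ.trans τ.symm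
             left_inv := fun ν' => by ext i; simp
             right_inv := fun τ => by ext i; simp } :
            Equiv.Perm (Fin n) ≃ Equiv.Perm (Fin n))
          (fun τ => ∫ p in Asec s1 t1 s2 t2 n (σ, τ), F p)]
        refine Finset.sum_congr rfl fun ν' _ => ?_
        simp only [Equiv.coe_fn_mk, hF]
        exact Asec_integral X w s1 t1 s2 t2 σ ν'
end
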